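/- Let q be a prime power and let f ∈ F_q[T][X] be nonconstant in X with f(u) ≠ 0 (as an element of F_q[T]) for every u ∈ F_q. Assume f splits completely over F_q((T)) and (q+1)·deg_T f = deg_X f. Then every primitive polynomial g ∈ F_q[T][X] that is irreducible over F_q(T) and divides f satisfies deg_X g = (q+1)·deg_T g, and moreover q+1 divides deg_X g. (Equivalently: every root of f has height exactly 1/(q+1) and degree over F_q(T) divisible by q+1.) -/

import Mathlib

set_option maxHeartbeats 2000000


open Polynomial

/-- The `T`-degree of `f ∈ F[T][X]`: the maximal `T`-degree of its coefficients
(the variable of the inner polynomial ring plays the role of `T`). -/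
noncomputable def degT {F : Type*} [Field F] (f : Polynomial (Polynomial F)) : ℕ :=
  f.support.sup fun i => (f.coeff i).natDegree

/-- View `f ∈ F[T][X]` as a polynomial in `X` over the rational function field `F(T)`. -/
noncomputable def toRat {F : Type*} [Field F] (f : Polynomial (Polynomial F)) :
    Polynomial (RatFunc F) :=
  f.map (algebraMap (Polynomial F) (RatFunc F))

/-- `f ∈ F[T][X]` splits completely (into linear factors) over the
Laurent series field `F((T))`. -/
def SplitsCompletely {F : Type*} [Field F] (f : Polynomial (Polynomial F)) : Prop :=
  Polynomial.Splits (f.map (algebraMap (Polynomial F) (LaurentSeries F)))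

section Aux

open HahnSeries

variable {F : Type*} [Field F]

/-- swap the two variables of `F[T][X]`. -/
noncomputable def swapPoly : Polynomial (Polynomial F) →+* Polynomial (Polynomial F) :=
  eval₂RingHom (mapRingHom Polynomial.C) (Polynomial.C Polynomial.X)

lemma swapPoly_coeff (f : Polynomial (Polynomial F)) (i j : ℕ) :
    ((swapPoly f).coeff j).coeff i = (f.coeff i).coeff j := by
  induction f using Polynomial.induction_on' with
  | add p q hp hq => simp [map_add, hp, hq]
  | monomial n a =>
    simp only [swapPoly, coe_eval₂RingHom, eval₂_monomial, coe_mapRingHom]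
    rw [← Polynomial.C_pow, coeff_mul_C, coeff_map, coeff_monomial]
    by_cases h : n = i
    · subst h; simp [coeff_X_pow]
    · simp [coeff_X_pow, Ne.symm h, h]

lemma swapPoly_ne_zero {f : Polynomial (Polynomial F)} (hf : f ≠ 0) : swapPoly f ≠ 0 := by
  intro h
  apply hf
  ext i j
  have := swapPoly_coeff f i j
  rw [h] at this
  simpa using this.symm

lemma natDegree_swapPoly (f : Polynomial (Polynomial F)) :
    (swapPoly f).natDegree = degT f := by
  apply le_antisymm
  · apply natDegree_le_iff_coeff_eq_zero.2
    intro j hj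
    ext i
    rw [swapPoly_coeff, Polynomial.coeff_zero]
    by_cases hi : i ∈ f.support
    · exact coeff_eq_zero_of_natDegree_lt
        (lt_of_le_of_lt (Finset.le_sup (f := fun i => (f.coeff i).natDegree) hi) hj)
    · rw [notMem_support_iff.1 hi, Polynomial.coeff_zero]
  · apply Finset.sup_le
    intro i hi
    apply le_natDegree_of_ne_zero (n := (f.coeff i).natDegree)
    intro h
    have := swapPoly_coeff f i ((f.coeff i).natDegree)
    rw [h, Polynomial.coeff_zero] at this
    exact (Polynomial.leadingCoeff_ne_zero.2 (mem_support_iff.1 hi)) this.symm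

lemma degT_mul {g h : Polynomial (Polynomial F)} (hg : g ≠ 0) (hh : h ≠ 0) :
    degT (g * h) = degT g + degT h := by
  rw [← natDegree_swapPoly, map_mul, natDegree_mul (swapPoly_ne_zero hg) (swapPoly_ne_zero hh),
    natDegree_swapPoly, natDegree_swapPoly]

lemma order_ge_of_vanish {x : LaurentSeries F} (hx : x ≠ 0) (k : ℤ)
    (h : ∀ j < k, x.coeff j = 0) : k ≤ x.order := by
  by_contra hc
  exact (mt coeff_order_eq_zero.1 hx) (h _ (lt_of_not_ge hc))

lemma order_coe_le_natDegree (a : Polynomial F) (ha : a ≠ 0) :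
    (algebraMap (Polynomial F) (LaurentSeries F) a).order ≤ (a.natDegree : ℤ) := by
  apply order_le_of_coeff_ne_zero
  rw [Polynomial.algebraMap_hahnSeries_apply, PowerSeries.coeff_coe]
  simp only [Int.natCast_nonneg, if_neg (by simp : ¬ (a.natDegree : ℤ) < 0)]
  rw [Int.natAbs_natCast, Polynomial.coeff_coe]
  exact Polynomial.leadingCoeff_ne_zero.2 ha

lemma order_multiset_prod (s : Multiset (LaurentSeries F)) (h : ∀ x ∈ s, x ≠ 0) :
    s.prod.order = (s.map HahnSeries.order).sum := by
  induction s using Multiset.induction with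
  | empty => simp [HahnSeries.order_one]
  | cons a t ih =>
    have ha : a ≠ 0 := h a (Multiset.mem_cons_self a t)
    have ht : ∀ x ∈ t, x ≠ 0 := fun x hx => h x (Multiset.mem_cons_of_mem hx)
    have htprod : t.prod ≠ 0 := by
      intro h0
      exact ht 0 (Multiset.prod_eq_zero_iff.1 h0) rfl
    rw [Multiset.prod_cons, HahnSeries.order_mul ha htprod, Multiset.map_cons,
      Multiset.sum_cons, ih ht]

lemma order_finset_prod {ι : Type*} (s : Finset ι) (f : ι → LaurentSeries F)
    (h : ∀ i ∈ s, f i ≠ 0) :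
    (∏ i ∈ s, f i).order = ∑ i ∈ s, (f i).order := by
  classical
  induction s using Finset.cons_induction with
  | empty => simp [HahnSeries.order_one]
  | cons a t hat ih =>
    have hprod : (∏ i ∈ t, f i) ≠ 0 :=
      Finset.prod_ne_zero_iff.2 fun i hi => h i (Finset.mem_cons_of_mem hi)
    rw [Finset.prod_cons, Finset.sum_cons,
      HahnSeries.order_mul (h a (Finset.mem_cons_self a t)) hprod,
      ih fun i hi => h i (Finset.mem_cons_of_mem hi)]

/-- truncate a Laurent series to a power series -/
noncomputable def Ltrunc (x : LaurentSeries F) : PowerSeries F :=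
  PowerSeries.mk fun n => x.coeff n

lemma ofPowerSeries_Ltrunc (x : LaurentSeries F) (h : ∀ j < (0:ℤ), x.coeff j = 0) :
    (HahnSeries.ofPowerSeries ℤ F) (Ltrunc x) = x := by
  ext j
  rw [show (HahnSeries.ofPowerSeries ℤ F) (Ltrunc x)
      = ((Ltrunc x : PowerSeries F) : LaurentSeries F) from rfl,
    PowerSeries.coeff_coe]
  split_ifs with hj
  · exact (h j hj).symm
  · rw [Ltrunc, PowerSeries.coeff_mk]
    congr 1
    omega

lemma algebraMap_C_eq (u : F) :
    algebraMap (Polynomial F) (LaurentSeries F) (Polynomial.C u) = HahnSeries.C u := by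
  rw [Polynomial.algebraMap_hahnSeries_apply, Polynomial.coe_C, HahnSeries.ofPowerSeries_C]

lemma coeff_algebraMap_C (u : F) (j : ℤ) :
    (algebraMap (Polynomial F) (LaurentSeries F) (Polynomial.C u)).coeff j
      = if j = 0 then u else 0 := by
  rw [algebraMap_C_eq, HahnSeries.C_apply, HahnSeries.coeff_single]
  simp

lemma map_coe_eq_map_algebraMap (g : Polynomial (Polynomial F)) :
    (g.map (Polynomial.coeToPowerSeries.ringHom)).map (HahnSeries.ofPowerSeries ℤ F)
      = g.map (algebraMap (Polynomial F) (LaurentSeries F)) := by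
  rw [Polynomial.map_map]
  congr 1

lemma multiset_finset_sum_swap {A B : Type*} (s : Multiset A) (t : Finset B) (f : B → A → ℤ) :
    ∑ b ∈ t, (s.map (f b)).sum = (s.map fun a => ∑ b ∈ t, f b a).sum := by
  induction s using Multiset.induction with
  | empty => simp
  | cons a s ih => simp [Finset.sum_add_distrib, ih]

lemma multiset_sum_map_neg {A : Type*} (s : Multiset A) (f : A → ℤ) :
    (s.map fun a => -f a).sum = -(s.map f).sum := by
  induction s using Multiset.induction with
  | empty => simp
  | cons a t ih => simp [ih]; ring

lemma multiset_sum_map_linear {A : Type*} (s : Multiset A) (f : A → ℤ) (c : ℤ) :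
    (s.map fun a => 1 - c * f a).sum = (Multiset.card s : ℤ) - c * (s.map f).sum := by
  induction s using Multiset.induction with
  | empty => simp
  | cons a t ih => simp [ih]; ring

lemma natDegree_eval_C_le (g : Polynomial (Polynomial F)) (u : F) :
    (g.eval (Polynomial.C u)).natDegree ≤ degT g := by
  rw [eval_eq_sum_range]
  apply natDegree_sum_le_of_forall_le
  intro i _
  calc ((g.coeff i * Polynomial.C u ^ i).natDegree)
      ≤ (g.coeff i).natDegree + (Polynomial.C u ^ i).natDegree := natDegree_mul_le
    _ ≤ (g.coeff i).natDegree + 0 := by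
        rw [← map_pow]; simp [natDegree_C]
    _ ≤ degT g := by
        rw [add_zero]
        by_cases hi : g.coeff i = 0
        · simp [hi]
        · exact Finset.le_sup (f := fun i => (g.coeff i).natDegree) (mem_support_iff.2 hi)

theorem key_bound [Fintype F] (g : Polynomial (Polynomial F))
    (hroot : ∀ u : F, g.eval (Polynomial.C u) ≠ 0)
    (hsplit : Splits (g.map (algebraMap (Polynomial F) (LaurentSeries F)))) :
    g.natDegree ≤ (Fintype.card F + 1) * degT g := by
  classical
  set q := Fintype.card F with hq
  set φ := algebraMap (Polynomial F) (LaurentSeries F) with hφ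
  have hφinj : Function.Injective φ := Polynomial.algebraMap_hahnSeries_injective ℤ
  have hg : g ≠ 0 := fun h => hroot 0 (by simp [h])
  set p := g.map φ with hpdef
  have hp : p ≠ 0 := (Polynomial.map_ne_zero_iff hφinj).2 hg
  set lc := φ g.leadingCoeff with hlcdef
  have hlc : lc ≠ 0 := by
    intro h
    exact Polynomial.leadingCoeff_ne_zero.2 hg (hφinj (by rw [map_zero]; exact h))
  have hsplit' : p.Splits :=
    hsplit
  have hndeg : p.natDegree = g.natDegree := natDegree_map_eq_of_injective hφinj g
  have hcard : p.roots.card = g.natDegree := by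
    rw [splits_iff_card_roots.1 hsplit', hndeg]
  have hfact : p = Polynomial.C lc * (p.roots.map fun a => X - Polynomial.C a).prod := by
    have := hsplit'.eq_prod_roots
    rwa [show p.leadingCoeff = lc by rw [hlcdef, hpdef]; exact leadingCoeff_map_of_leadingCoeff_ne_zero φ (by rw [← hlcdef]; exact hlc)] at this
  set e : F → LaurentSeries F := fun u => φ (Polynomial.C u) with he
  have hevalne : ∀ u : F, φ (g.eval (Polynomial.C u)) ≠ 0 := by
    intro u h
    exact hroot u (hφinj (by simpa using h))
  have heval : ∀ u : F, φ (g.eval (Polynomial.C u))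
      = lc * (p.roots.map fun α => e u - α).prod := by
    intro u
    have h1 : φ (g.eval (Polynomial.C u)) = p.eval (e u) := by
      rw [hpdef, eval_map, eval₂_hom]
    rw [h1]
    conv_lhs => rw [hfact]
    rw [eval_mul, eval_C, eval_multiset_prod, Multiset.map_map]
    congr 1
    exact congrArg Multiset.prod (Multiset.map_congr rfl fun α _ => by simp)
  have hne : ∀ (u : F) (α : LaurentSeries F), α ∈ p.roots → e u - α ≠ 0 := by
    intro u α hα h0
    apply hevalne u
    rw [heval u]
    apply mul_eq_zero_of_right
    apply Multiset.prod_eq_zero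
    rw [← h0]
    exact Multiset.mem_map_of_mem _ hα
  have hαne : ∀ α ∈ p.roots, α ≠ 0 := by
    intro α hα h0
    have := hne 0 α hα
    rw [h0, sub_zero, he] at this
    simp at this
  set S : ℤ := (p.roots.map fun α => max 0 (-HahnSeries.order α)).sum with hS
  -- Claim A : S ≤ lc.order
  have claimA : S ≤ lc.order := by
    set ψ := HahnSeries.ofPowerSeries ℤ F with hψ
    set neg := p.roots.filter (fun α => α.order < 0) with hnegdef
    set nonneg := p.roots.filter (fun α => ¬ α.order < 0) with hnonnegdef
    have hsplitm : neg + nonneg = p.roots := Multiset.filter_add_not _ _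
    set P2 : Polynomial (LaurentSeries F) := (nonneg.map fun α => X - Polynomial.C α).prod
      with hP2
    set P1 : Polynomial (LaurentSeries F) :=
      Polynomial.C lc * (neg.map fun α => X - Polynomial.C α).prod with hP1
    have hP2monic : P2.Monic := monic_multiset_prod_of_monic _ _ (fun a _ => monic_X_sub_C a)
    have hfact2 : p = P2 * P1 := by
      rw [hfact, ← hsplitm, Multiset.map_add, Multiset.prod_add, hP2, hP1]
      rw [mul_comm ((Multiset.map (fun α => X - Polynomial.C α) nonneg).prod)
        (Polynomial.C lc * (Multiset.map (fun α => X - Polynomial.C α) neg).prod), mul_assoc]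
    have hnonneg_coeff : ∀ α ∈ nonneg, ∀ j < (0:ℤ), α.coeff j = 0 := by
      intro α hαn j hj
      have h1 : ¬ α.order < 0 := (Multiset.mem_filter.1 hαn).2
      by_contra hc
      exact absurd (order_le_of_coeff_ne_zero hc) (by omega)
    set P20 := (nonneg.map fun α => X - Polynomial.C (Ltrunc α)).prod with hP20
    have hP20monic : P20.Monic := monic_multiset_prod_of_monic _ _ (fun a _ => monic_X_sub_C _)
    have hP20map : P20.map ψ = P2 := by
      rw [hP20, Polynomial.map_multiset_prod, Multiset.map_map, hP2]
      apply congrArg Multiset.prod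
      apply Multiset.map_congr rfl
      intro α hαn
      simp only [Function.comp_apply, Polynomial.map_sub, Polynomial.map_X, Polynomial.map_C]
      rw [ofPowerSeries_Ltrunc α (hnonneg_coeff α hαn)]
    set g0 := g.map Polynomial.coeToPowerSeries.ringHom with hg0def
    have hg0 : g0.map ψ = p := map_coe_eq_map_algebraMap g
    have hq0 : (g0 /ₘ P20).map ψ = P1 := by
      rw [Polynomial.map_divByMonic ψ hP20monic, hg0, hP20map, hfact2,
        mul_divByMonic_cancel_left _ hP2monic]
    have hc0 : P1.coeff 0 = ψ ((g0 /ₘ P20).coeff 0) := by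
      rw [← hq0, Polynomial.coeff_map]
    have hnegne : ∀ x ∈ neg.map (fun α => -α), x ≠ (0 : LaurentSeries F) := by
      intro x hx
      obtain ⟨α, hαn, rfl⟩ := Multiset.mem_map.1 hx
      exact neg_ne_zero.2 (hαne α (Multiset.mem_of_mem_filter hαn))
    have hprodne : (neg.map fun α => -α).prod ≠ 0 := by
      intro h0
      exact hnegne 0 (Multiset.prod_eq_zero_iff.1 h0) rfl
    have hc0' : P1.coeff 0 = lc * (neg.map fun α => -α).prod := by
      rw [hP1, coeff_zero_eq_eval_zero, eval_mul, eval_C, eval_multiset_prod, Multiset.map_map]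
      congr 1
      exact congrArg Multiset.prod (Multiset.map_congr rfl fun α _ => by simp)
    have hP1ne : P1.coeff 0 ≠ 0 := by
      rw [hc0']
      exact mul_ne_zero hlc hprodne
    have hord0 : 0 ≤ (P1.coeff 0).order := by
      apply order_ge_of_vanish hP1ne
      intro j hj
      rw [hc0, hψ]
      rw [show ((HahnSeries.ofPowerSeries ℤ F) ((g0 /ₘ P20).coeff 0))
          = (((g0 /ₘ P20).coeff 0 : PowerSeries F) : LaurentSeries F) from rfl,
        PowerSeries.coeff_coe, if_pos hj]
    have hordeq : (P1.coeff 0).order = lc.order + (neg.map HahnSeries.order).sum := by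
      rw [hc0', HahnSeries.order_mul hlc hprodne, order_multiset_prod _ hnegne,
        Multiset.map_map]
      congr 2
      exact Multiset.map_congr rfl fun α _ => HahnSeries.order_neg
    have hSeq : S = -(neg.map HahnSeries.order).sum := by
      rw [hS, ← hsplitm, Multiset.map_add, Multiset.sum_add]
      have h1 : (nonneg.map fun α => max 0 (-HahnSeries.order α)).sum = 0 := by
        apply Multiset.sum_eq_zero
        intro x hx
        obtain ⟨α, hαn, rfl⟩ := Multiset.mem_map.1 hx
        have h2 : ¬ α.order < 0 := (Multiset.mem_filter.1 hαn).2
        exact max_eq_left (by omega)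
      have h2 : (neg.map fun α => max 0 (-HahnSeries.order α)).sum
          = -(neg.map HahnSeries.order).sum := by
        rw [Multiset.map_congr rfl (fun α hαn => max_eq_right
          (by have h3 : α.order < 0 := (Multiset.mem_filter.1 hαn).2; omega))]
        exact multiset_sum_map_neg _ _
      rw [h1, h2, add_zero]
    linarith [hord0, hordeq, hSeq]
  -- Claim B : lc.order ≤ degT g
  have claimB : lc.order ≤ (degT g : ℤ) := by
    refine le_trans (order_coe_le_natDegree _ (leadingCoeff_ne_zero.2 hg)) ?_
    exact_mod_cast Finset.le_sup (f := fun i => (g.coeff i).natDegree)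
      (natDegree_mem_support_of_nonzero hg)
  -- Claim C : per-root lower bound
  have claimC : ∀ α ∈ p.roots,
      (1 : ℤ) - ((q : ℤ) + 1) * max 0 (-HahnSeries.order α) ≤ ∑ u : F, (e u - α).order := by
    intro α hα
    by_cases ho : α.order < 0
    · have horder : ∀ u : F, (e u - α).order = α.order := by
        intro u
        apply le_antisymm
        · apply order_le_of_coeff_ne_zero (g := α.order)
          rw [HahnSeries.coeff_sub, he]
          simp only []
          rw [coeff_algebraMap_C, if_neg (by omega)]
          rw [zero_sub, neg_ne_zero]
          exact mt coeff_order_eq_zero.1 (hαne α hα)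
        · apply order_ge_of_vanish (hne u α hα)
          intro j hj
          rw [HahnSeries.coeff_sub, he]
          simp only []
          rw [coeff_algebraMap_C, if_neg (by omega)]
          have hz : α.coeff j = 0 := by
            by_contra hc
            exact absurd (order_le_of_coeff_ne_zero hc) (by omega)
          simp [hz]
      rw [Finset.sum_congr rfl (fun u _ => horder u), Finset.sum_const, Finset.card_univ, ← hq,
        nsmul_eq_mul]
      have hmax : max 0 (-α.order) = -α.order := max_eq_right (by omega)
      rw [hmax]
      have h1 : α.order ≤ -1 := by omega
      nlinarith [Int.natCast_nonneg q, h1]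
    · have hmax : max 0 (-α.order) = (0 : ℤ) := max_eq_left (by omega)
      rw [hmax, mul_zero, sub_zero]
      have hnn : ∀ u : F, 0 ≤ (e u - α).order := by
        intro u
        apply order_ge_of_vanish (hne u α hα)
        intro j hj
        rw [HahnSeries.coeff_sub, he]
        simp only []
        rw [coeff_algebraMap_C, if_neg (by omega)]
        have hz : α.coeff j = 0 := by
          by_contra hc
          exact absurd (order_le_of_coeff_ne_zero hc) (by omega)
        simp [hz]
      have hc1 : 1 ≤ (e (α.coeff 0) - α).order := by
        apply order_ge_of_vanish (hne _ α hα)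
        intro j hj
        rw [HahnSeries.coeff_sub, he]
        simp only []
        rw [coeff_algebraMap_C]
        by_cases hj0 : j = 0
        · subst hj0
          simp
        · rw [if_neg hj0]
          have hz : α.coeff j = 0 := by
            by_contra hc
            exact absurd (order_le_of_coeff_ne_zero hc) (by omega)
          simp [hz]
      exact le_trans hc1 (Finset.single_le_sum (fun u _ => hnn u) (Finset.mem_univ _))
  -- Claim D : assembly
  set Rp := ∏ u : F, g.eval (Polynomial.C u) with hRdef
  have hRne : Rp ≠ 0 := Finset.prod_ne_zero_iff.2 fun u _ => hroot u
  have hprodne' : ∀ u : F, (p.roots.map fun α => e u - α).prod ≠ 0 := by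
    intro u h0
    obtain ⟨α, hα, hzz⟩ := Multiset.mem_map.1 (Multiset.prod_eq_zero_iff.1 h0)
    exact hne u α hα hzz
  have h2 : ∀ u : F, (φ (g.eval (Polynomial.C u))).order
      = lc.order + (p.roots.map fun α => (e u - α).order).sum := by
    intro u
    rw [heval u, HahnSeries.order_mul hlc (hprodne' u),
      order_multiset_prod _ (by
        intro x hx
        obtain ⟨α, hα, rfl⟩ := Multiset.mem_map.1 hx
        exact hne u α hα), Multiset.map_map]
    rfl
  have h1 : (φ Rp).order
      = (q : ℤ) * lc.order + ∑ u : F, (p.roots.map fun α => (e u - α).order).sum := by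
    rw [hRdef, map_prod, order_finset_prod _ _ (fun u _ => hevalne u),
      Finset.sum_congr rfl fun u _ => h2 u, Finset.sum_add_distrib, Finset.sum_const,
      Finset.card_univ, ← hq, nsmul_eq_mul]
  have hswap : ∑ u : F, (p.roots.map fun α => (e u - α).order).sum
      = (p.roots.map fun α => ∑ u : F, (e u - α).order).sum :=
    multiset_finset_sum_swap _ _ _
  have hlow : (g.natDegree : ℤ) - ((q:ℤ)+1) * S
      ≤ (p.roots.map fun α => ∑ u : F, (e u - α).order).sum := by
    have hb : (p.roots.map fun α => (1:ℤ) - ((q:ℤ)+1) * max 0 (-HahnSeries.order α)).sum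
        ≤ (p.roots.map fun α => ∑ u : F, (e u - α).order).sum :=
      Multiset.sum_map_le_sum_map _ _ (fun α hα => by
        have := claimC α hα
        linarith)
    have hc : (p.roots.map fun α => (1:ℤ) - ((q:ℤ)+1) * max 0 (-HahnSeries.order α)).sum
        = (g.natDegree : ℤ) - ((q:ℤ)+1) * S := by
      rw [multiset_sum_map_linear, hcard, ← hS]
    linarith [hb, hc.symm.trans_le hb]
  have hnatdeg : Rp.natDegree ≤ q * degT g := by
    refine le_trans (Polynomial.natDegree_prod_le _ _) ?_
    calc ∑ u : F, (g.eval (Polynomial.C u)).natDegree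
        ≤ ∑ _u : F, degT g := Finset.sum_le_sum fun u _ => natDegree_eval_C_le g u
      _ = q * degT g := by rw [Finset.sum_const, Finset.card_univ, ← hq, smul_eq_mul]
  have hup : (φ Rp).order ≤ (q : ℤ) * (degT g : ℤ) := by
    refine le_trans (order_coe_le_natDegree _ hRne) ?_
    exact_mod_cast Nat.cast_le.2 hnatdeg
  have hmul : ((q:ℤ)+1) * S ≤ ((q:ℤ)+1) * lc.order :=
    mul_le_mul_of_nonneg_left claimA (by positivity)
  have hfin : (g.natDegree : ℤ) ≤ ((q:ℤ)+1) * (degT g : ℤ) := by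
    rw [hswap] at h1
    linarith [h1, hlow, hup, hmul, claimB]
  have : g.natDegree ≤ (q+1) * degT g := by exact_mod_cast hfin
  simpa using this


end Aux

/-- If $f ∈ F_q[T][X]$ is nonconstant in $X$, has no root in $F_q$, splits
completely over $F_q((T))$ and satisfies $(q+1)\deg_T f = \deg_X f$, then every
primitive irreducible factor $g$ of $f$ satisfies $\deg_X g = (q+1)\deg_T g$, and
$q+1$ divides $\deg_X g$. -/

theorem height_weighted_average {F : Type*} [Field F] [Fintype F]
    (f : Polynomial (Polynomial F)) (hdeg : 0 < f.natDegree)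
    (hroot : ∀ u : F, f.eval (Polynomial.C u) ≠ 0)
    (hsplit : SplitsCompletely f)
    (hdT : (Fintype.card F + 1) * degT f = f.natDegree) :
    ∀ g : Polynomial (Polynomial F), g.IsPrimitive → Irreducible (toRat g) → g ∣ f →
      g.natDegree = (Fintype.card F + 1) * degT g ∧
        (Fintype.card F + 1) ∣ g.natDegree := by
  intro g _ _ hdvd
  have hfne : f ≠ 0 := fun h0 => by simp [h0] at hdeg
  obtain ⟨h, rfl⟩ := hdvd
  have hg0 : g ≠ 0 := left_ne_zero_of_mul hfne
  have hh0 : h ≠ 0 := right_ne_zero_of_mul hfne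
  have hrootg : ∀ u : F, g.eval (Polynomial.C u) ≠ 0 := fun u h0 =>
    hroot u (by rw [eval_mul, h0, zero_mul])
  have hrooth : ∀ u : F, h.eval (Polynomial.C u) ≠ 0 := fun u h0 =>
    hroot u (by rw [eval_mul, h0, mul_zero])
  set φ := algebraMap (Polynomial F) (LaurentSeries F) with hφ
  have hφinj : Function.Injective φ := Polynomial.algebraMap_hahnSeries_injective ℤ
  have hsplitid : Splits ((g * h).map φ) :=
    hsplit
  have hmapne : (g * h).map φ ≠ 0 := (Polynomial.map_ne_zero_iff hφinj).2 hfne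
  have hsplitg : Splits (g.map φ) := by
    exact Splits.of_dvd hsplitid hmapne
      (Polynomial.map_dvd φ (dvd_mul_right g h))
  have hsplith : Splits (h.map φ) := by
    exact Splits.of_dvd hsplitid hmapne
      (Polynomial.map_dvd φ (dvd_mul_left h g))
  have key1 : g.natDegree ≤ (Fintype.card F + 1) * degT g := key_bound g hrootg hsplitg
  have key2 : h.natDegree ≤ (Fintype.card F + 1) * degT h := key_bound h hrooth hsplith
  have hsum : (Fintype.card F + 1) * degT g + (Fintype.card F + 1) * degT h
      = g.natDegree + h.natDegree := by
    rw [← Nat.mul_add, ← degT_mul hg0 hh0, hdT, natDegree_mul hg0 hh0]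
  have hEq : g.natDegree = (Fintype.card F + 1) * degT g := by
    refine le_antisymm key1 ?_
    by_contra hc
    push_neg at hc
    exact absurd hsum.symm (ne_of_lt (add_lt_add_of_lt_of_le hc key2))
  exact ⟨hEq, hEq ▸ Dvd.intro _ rfl⟩
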